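/- arXiv:1009.5063 — 3 statements merged into one kernel-verified Lean document; each statement's English description precedes it below -/
import Mathlib

section
/- Let A = (a_{ij}) be a finitely supported matrix of non-negative integers with l(A) ≥ 1, and define the weighted lower sum sequence wls(A)_i = Σ_{i' ≥ i, j ≥ 1} j·a_{i'j}. Then for every i ≥ 1, δ(A) ≥ wls(A)_i + l(A) − 1, where δ(A) = Σ_{i,j} i·j·a_{ij} and l(A) is the largest row index of a non-zero entry. -/
/-- A matrix `A = (a_{ij})_{i,j≥1}` with non-negative integer entries and finite support,
encoded as a finitely supported function `ℕ × ℕ →₀ ℕ` whose support consists of pairs of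
positive indices. -/
def MatOK (A : ℕ × ℕ →₀ ℕ) : Prop := ∀ p ∈ A.support, 1 ≤ p.1 ∧ 1 ≤ p.2

/-- The cogenus `δ(A) = Σ_{i,j≥1} i·j·a_{ij}`. -/
def mdelta (A : ℕ × ℕ →₀ ℕ) : ℕ := A.sum fun p v => p.1 * p.2 * v

/-- `l(A)`: the largest row index of a non-zero entry of `A` (`0` for the zero matrix). -/
def rowLen (A : ℕ × ℕ →₀ ℕ) : ℕ := A.support.sup fun p => p.1

/-- The weighted lower sum sequence `wls(A)_i = Σ_{i' ≥ i, j ≥ 1} j·a_{i'j}`. -/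
def wls (A : ℕ × ℕ →₀ ℕ) (i : ℕ) : ℕ :=
  A.sum fun p v => if i ≤ p.1 then p.2 * v else 0

/-- For a non-zero finitely supported non-negative integer matrix `A` (so `l(A) ≥ 1`),
for every `i ≥ 1` one has `δ(A) ≥ wls(A)_i + l(A) − 1`. -/
theorem mdelta_ge_wls_add_rowLen (A : ℕ × ℕ →₀ ℕ) (hA : MatOK A) (hl : 1 ≤ rowLen A)
    (i : ℕ) (hi : 1 ≤ i) : wls A i + rowLen A ≤ mdelta A + 1 := by
  have hne : A.support.Nonempty := by
    by_contra h
    rw [Finset.not_nonempty_iff_eq_empty] at h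
    simp [rowLen, h] at hl
  obtain ⟨p0, hp0mem, hp0⟩ := Finset.exists_mem_eq_sup A.support hne (fun p => p.1)
  have hv0 : 1 ≤ A p0 := Nat.one_le_iff_ne_zero.mpr (Finsupp.mem_support_iff.mp hp0mem)
  have hj0 : 1 ≤ p0.2 := (hA p0 hp0mem).2
  have hi0 : 1 ≤ p0.1 := (hA p0 hp0mem).1
  rw [mdelta, wls, Finsupp.sum, Finsupp.sum,
    ← Finset.add_sum_erase _ _ hp0mem, ← Finset.add_sum_erase _ _ hp0mem]
  have hjv : 1 ≤ p0.2 * A p0 := Nat.mul_le_mul hj0 hv0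
  have h1 : (if i ≤ p0.1 then p0.2 * A p0 else 0) + rowLen A ≤ p0.1 * p0.2 * A p0 + 1 := by
    rw [rowLen, hp0, mul_assoc]
    have key : ∀ a b : ℕ, 1 ≤ a → 1 ≤ b → b + a ≤ a * b + 1 := by
      intro a b ha hb
      obtain ⟨a, rfl⟩ := Nat.exists_eq_add_of_le ha
      obtain ⟨b, rfl⟩ := Nat.exists_eq_add_of_le hb
      have := Nat.zero_le (a * b)
      ring_nf
      omega
    have := key p0.1 (p0.2 * A p0) hi0 hjv
    split_ifs with h
    · exact this
    · omega
  have h2 : ∑ p ∈ A.support.erase p0, (if i ≤ p.1 then p.2 * A p else 0) ≤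
      ∑ p ∈ A.support.erase p0, p.1 * p.2 * A p := by
    apply Finset.sum_le_sum
    intro p hp
    have h1p := (hA p (Finset.mem_of_mem_erase hp)).1
    split_ifs with h
    · calc p.2 * A p = 1 * (p.2 * A p) := (one_mul _).symm
        _ ≤ p.1 * (p.2 * A p) := Nat.mul_le_mul_right _ h1p
        _ = p.1 * p.2 * A p := (mul_assoc _ _ _).symm
    · exact Nat.zero_le _
  omega
end

section
/- For every extended template (Λ, A, B), one has d_min(Λ, A, B) − s(Λ, A, B) ≤ δ(Λ) + δ(A) + δ(B) + 1, where d_min(Λ,A,B) = max_{1≤i≤l(Λ)} ( l(Λ) − i + 1 + κ_i(Λ) + wls(A)_{l(Λ)+1−i} + wls(B)_{l(Λ)+1−i} ), i₀ is the smallest index attaining the maximum, and s(Λ,A,B) is the number of edges of Λ from i₀ − 1 to i₀. -/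
open scoped Classical

/-- The 1-norm `‖A‖₁ = Σ_{i,j} a_{ij}`. -/
def mnorm (A : ℕ × ℕ →₀ ℕ) : ℕ := A.sum fun _ v => v

/-- The cogenus of a multiset of weighted edges `(i,j,w)`: each edge contributes
`(j − i)·w − 1`. -/
def edgesDelta (E : Multiset (ℕ × ℕ × ℕ)) : ℕ :=
  (E.map fun e => (e.2.1 - e.1) * e.2.2 - 1).sum

/-- `κ_j`: the total weight of the edges `i → k` with `i < j ≤ k`. -/
def edgesKappa (E : Multiset (ℕ × ℕ × ℕ)) (j : ℕ) : ℕ :=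
  ((E.filter fun e => e.1 < j ∧ j ≤ e.2.1).map fun e => e.2.2).sum

/-- The data of an extended template: a directed multigraph `Λ` on vertices `{0,…,l}`
(the edge `(i,j,w)` goes from `i` to `j` and has weight `w`), together with two
finitely supported non-negative integer matrices `A` and `B`. -/
structure PreExtTemplate where
  l : ℕ
  edges : Multiset (ℕ × ℕ × ℕ)
  A : ℕ × ℕ →₀ ℕ
  B : ℕ × ℕ →₀ ℕ

/-- `(Λ, A, B)` is an extended template: edges of `Λ` go from smaller to larger vertices
(within `{0,…,l}`) and have positive weight, length-one edges have weight `≥ 2`, the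
matrices are supported on positive indices with `l(Λ) ≥ max(l(A), l(B))`, and every
vertex `j` with `1 ≤ j ≤ l(Λ) − max(l(A), l(B))` is covered by an edge `i → k` of `Λ`
with `i < j < k`. -/
def IsExtTemplate (T : PreExtTemplate) : Prop :=
  (∀ e ∈ T.edges, e.1 < e.2.1 ∧ e.2.1 ≤ T.l ∧ 1 ≤ e.2.2) ∧
  (∀ e ∈ T.edges, e.2.1 = e.1 + 1 → 2 ≤ e.2.2) ∧
  MatOK T.A ∧ MatOK T.B ∧
  max (rowLen T.A) (rowLen T.B) ≤ T.l ∧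
  (∀ j, 1 ≤ j → j + max (rowLen T.A) (rowLen T.B) ≤ T.l →
    ∃ e ∈ T.edges, e.1 < j ∧ j < e.2.1)

/-- The quantity `l(Λ) − i + 1 + κ_i(Λ) + wls(A)_{l(Λ)+1−i} + wls(B)_{l(Λ)+1−i}`
whose maximum over `1 ≤ i ≤ l(Λ)` is `d_min(Λ, A, B)`. -/
def gfun (T : PreExtTemplate) (i : ℕ) : ℕ :=
  T.l - i + 1 + edgesKappa T.edges i + wls T.A (T.l + 1 - i) + wls T.B (T.l + 1 - i)

/-- `d_min(Λ, A, B) = max_{1 ≤ i ≤ l(Λ)} (l(Λ) − i + 1 + κ_i(Λ) + wls(A)_{l+1−i} + wls(B)_{l+1−i})`. -/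
def dMin (T : PreExtTemplate) : ℕ := (Finset.Icc 1 T.l).sup (gfun T)

lemma edgesKappa_cons (a : ℕ × ℕ × ℕ) (E : Multiset (ℕ × ℕ × ℕ)) (j : ℕ) :
    edgesKappa (a ::ₘ E) j = (if a.1 < j ∧ j ≤ a.2.1 then a.2.2 else 0) + edgesKappa E j := by
  unfold edgesKappa
  rw [Multiset.filter_cons]
  split_ifs <;> simp <;> omega

lemma edgesDelta_cons (a : ℕ × ℕ × ℕ) (E : Multiset (ℕ × ℕ × ℕ)) :
    edgesDelta (a ::ₘ E) = ((a.2.1 - a.1) * a.2.2 - 1) + edgesDelta E := by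
  simp [edgesDelta]

lemma scount_cons (a : ℕ × ℕ × ℕ) (E : Multiset (ℕ × ℕ × ℕ)) (p : ℕ × ℕ × ℕ → Prop) [DecidablePred p] :
    Multiset.card ((a ::ₘ E).filter p)
      = (if p a then 1 else 0) + Multiset.card (E.filter p) := by
  rw [Multiset.filter_cons]
  split_ifs <;> simp <;> omega

lemma edge_bound (i0 i k w c : ℕ) (hik : i < k) (hw : 1 ≤ w)
    (hc : c ≤ k - i - 1) (hc2 : i < i0 ∧ i0 ≤ k → c ≤ k - i0 - 1) :
    (if i < i0 ∧ i0 ≤ k then w else 0) + c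
      ≤ (k - i) * w - 1 + (if i = i0 - 1 ∧ k = i0 then 1 else 0) := by
  obtain ⟨d, hd⟩ : ∃ d, k - i = d + 1 := ⟨k - i - 1, by omega⟩
  obtain ⟨w', hw'⟩ : ∃ w', w = w' + 1 := ⟨w - 1, by omega⟩
  obtain ⟨t, ht⟩ : ∃ t, (k - i) * w = t + d + w' + 1 := ⟨d * w', by rw [hd, hw']; ring⟩
  rw [ht]
  split_ifs <;> omega

lemma kappa_le (i0 : ℕ) (E : Multiset (ℕ × ℕ × ℕ))
    (hE : ∀ e ∈ E, e.1 < e.2.1 ∧ 1 ≤ e.2.2) :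
    edgesKappa E i0 ≤ edgesDelta E +
      Multiset.card (E.filter fun e => e.1 = i0 - 1 ∧ e.2.1 = i0) := by
  induction E using Multiset.induction with
  | empty => simp [edgesKappa, edgesDelta]
  | cons a E ih =>
    have ha := hE a (Multiset.mem_cons_self a E)
    have hrec := ih (fun e he => hE e (Multiset.mem_cons_of_mem he))
    have hb := edge_bound i0 a.1 a.2.1 a.2.2 0 ha.1 ha.2 (by omega) (by omega)
    rw [edgesKappa_cons, edgesDelta_cons, scount_cons]
    split_ifs at hb ⊢ <;> omega

lemma charge (i0 : ℕ) : ∀ (n : ℕ) (S : Finset ℕ) (E : Multiset (ℕ × ℕ × ℕ)),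
    S.card ≤ n →
    (∀ e ∈ E, e.1 < e.2.1 ∧ 1 ≤ e.2.2) →
    (∀ j ∈ S, i0 < j) →
    (∀ j ∈ S, ∃ e ∈ E, e.1 < j ∧ j < e.2.1) →
    edgesKappa E i0 + S.card ≤
      edgesDelta E + Multiset.card (E.filter fun e => e.1 = i0 - 1 ∧ e.2.1 = i0) := by
  intro n
  induction n with
  | zero =>
    intro S E hcard hE hS1 hS2
    have hS : S = ∅ := Finset.card_eq_zero.mp (Nat.le_antisymm hcard (Nat.zero_le _))
    subst hS
    simpa using kappa_le i0 E hE
  | succ n ih =>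
    intro S E hcard hE hS1 hS2
    rcases S.eq_empty_or_nonempty with rfl | ⟨j, hj⟩
    · simpa using kappa_le i0 E hE
    · obtain ⟨e, heE, he1, he2⟩ := hS2 j hj
      set S' := S.filter (fun x => ¬ (e.1 < x ∧ x < e.2.1)) with hS'
      set Sc := S.filter (fun x => e.1 < x ∧ x < e.2.1) with hScdef
      have hjSc : j ∈ Sc := Finset.mem_filter.mpr ⟨hj, he1, he2⟩
      have hcards : Sc.card + S'.card = S.card := by
        rw [hScdef, hS']
        exact Finset.card_filter_add_card_filter_not _
      have hEe := Multiset.cons_erase heE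
      have hErest : ∀ e' ∈ E.erase e, e'.1 < e'.2.1 ∧ 1 ≤ e'.2.2 :=
        fun e' he' => hE e' (Multiset.mem_of_mem_erase he')
      have hS1' : ∀ j' ∈ S', i0 < j' := fun j' hj' => hS1 j' (Finset.mem_of_mem_filter j' hj')
      have hS2' : ∀ j' ∈ S', ∃ e' ∈ E.erase e, e'.1 < j' ∧ j' < e'.2.1 := by
        intro j' hj'
        obtain ⟨hj'S, hj'n⟩ := Finset.mem_filter.mp hj'
        obtain ⟨e', he'E, h1, h2⟩ := hS2 j' hj'S
        have hne : e' ≠ e := by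
          intro h; subst h; exact hj'n ⟨h1, h2⟩
        exact ⟨e', (Multiset.mem_erase_of_ne hne).mpr he'E, h1, h2⟩
      have hrec := ih S' (E.erase e)
        (by
          have h1 : 1 ≤ Sc.card := Finset.card_pos.mpr ⟨j, hjSc⟩
          omega)
        hErest hS1' hS2'
      have hc1 : Sc.card ≤ e.2.1 - e.1 - 1 := by
        have : Sc ⊆ Finset.Ioo e.1 e.2.1 := by
          intro x hx
          obtain ⟨_, h1, h2⟩ := Finset.mem_filter.mp hx
          exact Finset.mem_Ioo.mpr ⟨h1, h2⟩
        simpa [Nat.card_Ioo] using Finset.card_le_card this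
      have hc2 : e.1 < i0 ∧ i0 ≤ e.2.1 → Sc.card ≤ e.2.1 - i0 - 1 := by
        intro hsp
        have : Sc ⊆ Finset.Ioo i0 e.2.1 := by
          intro x hx
          obtain ⟨hxS, _, h2⟩ := Finset.mem_filter.mp hx
          exact Finset.mem_Ioo.mpr ⟨hS1 x hxS, h2⟩
        simpa [Nat.card_Ioo] using Finset.card_le_card this
      have hee := hE e heE
      have hb := edge_bound i0 e.1 e.2.1 e.2.2 Sc.card hee.1 hee.2 hc1 hc2
      rw [← hEe, edgesKappa_cons, edgesDelta_cons, scount_cons]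
      split_ifs at hb ⊢ <;> omega

lemma mdelta_eq (A : ℕ × ℕ →₀ ℕ) : mdelta A = ∑ p ∈ A.support, p.1 * p.2 * A p := rfl

lemma wls_eq (A : ℕ × ℕ →₀ ℕ) (n : ℕ) :
    wls A n = ∑ p ∈ A.support, (if n ≤ p.1 then p.2 * A p else 0) := rfl

lemma wls_le_mdelta (A : ℕ × ℕ →₀ ℕ) (hA : MatOK A) (n : ℕ) : wls A n ≤ mdelta A := by
  rw [wls_eq, mdelta_eq]
  apply Finset.sum_le_sum
  intro p hp
  have h1 := (hA p hp).1
  split_ifs with h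
  · calc p.2 * A p = 1 * (p.2 * A p) := (one_mul _).symm
      _ ≤ p.1 * (p.2 * A p) := Nat.mul_le_mul_right _ h1
      _ = p.1 * p.2 * A p := (mul_assoc _ _ _).symm
  · exact Nat.zero_le _

lemma wls_eq_zero (A : ℕ × ℕ →₀ ℕ) (n : ℕ) (h : rowLen A < n) : wls A n = 0 := by
  rw [wls_eq]
  apply Finset.sum_eq_zero
  intro p hp
  have : p.1 ≤ rowLen A := Finset.le_sup (f := fun p : ℕ × ℕ => p.1) hp
  rw [if_neg (by omega)]

lemma rowLen_le_mdelta (A : ℕ × ℕ →₀ ℕ) (hA : MatOK A) : rowLen A ≤ mdelta A := by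
  rcases A.support.eq_empty_or_nonempty with h | h
  · simp [rowLen, h]
  · obtain ⟨p0, hp0, hmax⟩ := Finset.exists_mem_eq_sup A.support h (fun p : ℕ × ℕ => p.1)
    have hv : 1 ≤ A p0 := Nat.one_le_iff_ne_zero.mpr (Finsupp.mem_support_iff.mp hp0)
    have hj : 1 ≤ p0.2 := (hA p0 hp0).2
    rw [mdelta_eq]
    calc rowLen A = p0.1 := hmax
      _ = p0.1 * 1 * 1 := by ring
      _ ≤ p0.1 * p0.2 * A p0 := Nat.mul_le_mul (Nat.mul_le_mul le_rfl hj) hv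
      _ ≤ ∑ p ∈ A.support, p.1 * p.2 * A p :=
        Finset.single_le_sum (f := fun p : ℕ × ℕ => p.1 * p.2 * A p)
          (fun p _ => Nat.zero_le _) hp0

lemma wls_add_le (A : ℕ × ℕ →₀ ℕ) (hA : MatOK A) (n : ℕ) (hn1 : 1 ≤ n)
    (hn2 : n ≤ rowLen A) : n - 1 + wls A n ≤ mdelta A := by
  have hne : A.support.Nonempty := by
    rcases A.support.eq_empty_or_nonempty with h | h
    · exfalso; rw [rowLen, h] at hn2; simp at hn2; omega
    · exact h
  obtain ⟨p0, hp0, hmax⟩ := Finset.exists_mem_eq_sup A.support hne (fun p : ℕ × ℕ => p.1)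
  have hv : 1 ≤ A p0 := Nat.one_le_iff_ne_zero.mpr (Finsupp.mem_support_iff.mp hp0)
  have hj : 1 ≤ p0.2 := (hA p0 hp0).2
  have hp01 : n ≤ p0.1 := by rw [rowLen] at hn2; omega
  rw [wls_eq, mdelta_eq]
  rw [← Finset.sum_erase_add _ _ hp0,
    ← Finset.sum_erase_add A.support (fun p : ℕ × ℕ => p.1 * p.2 * A p) hp0]
  have h1 : ∑ p ∈ A.support.erase p0, (if n ≤ p.1 then p.2 * A p else 0)
      ≤ ∑ p ∈ A.support.erase p0, p.1 * p.2 * A p := by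
    apply Finset.sum_le_sum
    intro p hp
    have h1 := (hA p (Finset.mem_of_mem_erase hp)).1
    split_ifs with h
    · calc p.2 * A p = 1 * (p.2 * A p) := (one_mul _).symm
        _ ≤ p.1 * (p.2 * A p) := Nat.mul_le_mul_right _ h1
        _ = p.1 * p.2 * A p := (mul_assoc _ _ _).symm
    · exact Nat.zero_le _
  have h2 : n - 1 + (if n ≤ p0.1 then p0.2 * A p0 else 0) ≤ p0.1 * p0.2 * A p0 := by
    rw [if_pos hp01]
    have : n * (p0.2 * A p0) ≤ p0.1 * (p0.2 * A p0) := Nat.mul_le_mul_right _ hp01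
    obtain ⟨x, hx⟩ : ∃ x, p0.2 * A p0 = x + 1 :=
      ⟨p0.2 * A p0 - 1, by have h := Nat.mul_pos hj hv; omega⟩
    obtain ⟨t, ht⟩ : ∃ t, n * (p0.2 * A p0) = t + n + x :=
      ⟨(n - 1) * x, by
        rw [hx]
        cases n with
        | zero => omega
        | succ m => simp only [Nat.add_sub_cancel]; ring⟩
    have hassoc : p0.1 * p0.2 * A p0 = p0.1 * (p0.2 * A p0) := mul_assoc _ _ _
    omega
  omega


/-- For every extended template `(Λ, A, B)`:
`d_min(Λ,A,B) − s(Λ,A,B) ≤ δ(Λ) + δ(A) + δ(B) + 1`, where `i₀` is the smallest index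
attaining the maximum defining `d_min`, and `s(Λ,A,B)` is the number of edges of `Λ`
from `i₀ − 1` to `i₀`.  (Stated in the subtraction-free form
`d_min ≤ δ(Λ) + δ(A) + δ(B) + 1 + s`.) -/
theorem dMin_le (T : PreExtTemplate) (hT : IsExtTemplate T) (i0 : ℕ)
    (hi0l : 1 ≤ i0) (hi0r : i0 ≤ T.l) (hi0max : gfun T i0 = dMin T)
    (hi0least : ∀ i, 1 ≤ i → i < i0 → gfun T i < dMin T) :
    dMin T ≤ edgesDelta T.edges + mdelta T.A + mdelta T.B + 1 +
      Multiset.card (T.edges.filter fun e => e.1 = i0 - 1 ∧ e.2.1 = i0) := by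
  obtain ⟨hE1, hE2, hA, hB, hlm, hcov⟩ := hT
  have hEok : ∀ e ∈ T.edges, e.1 < e.2.1 ∧ 1 ≤ e.2.2 :=
    fun e he => ⟨(hE1 e he).1, (hE1 e he).2.2⟩
  rw [← hi0max]
  rw [gfun]
  set n0 := T.l + 1 - i0 with hn0
  set m := max (rowLen T.A) (rowLen T.B) with hm
  by_cases hc : n0 ≤ m
  · have hκ := kappa_le i0 T.edges hEok
    have hn01 : 1 ≤ n0 := by omega
    rcases le_max_iff.mp hc with h | h
    · have h1 := wls_add_le T.A hA n0 hn01 h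
      have h2 := wls_le_mdelta T.B hB n0
      omega
    · have h1 := wls_add_le T.B hB n0 hn01 h
      have h2 := wls_le_mdelta T.A hA n0
      omega
  · have hzA : wls T.A n0 = 0 := wls_eq_zero T.A n0 (by omega)
    have hzB : wls T.B n0 = 0 := wls_eq_zero T.B n0 (by omega)
    have hdA := rowLen_le_mdelta T.A hA
    have hdB := rowLen_le_mdelta T.B hB
    have hmab : m ≤ rowLen T.A + rowLen T.B := by omega
    set S := Finset.Icc (i0 + 1) (T.l - m) with hS
    have hS1 : ∀ j ∈ S, i0 < j := by
      intro j hj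
      have := Finset.mem_Icc.mp hj
      omega
    have hS2 : ∀ j ∈ S, ∃ e ∈ T.edges, e.1 < j ∧ j < e.2.1 := by
      intro j hj
      have hj' := Finset.mem_Icc.mp hj
      exact hcov j (by omega) (by omega)
    have hch := charge i0 S.card S T.edges le_rfl hEok hS1 hS2
    have hcard : S.card = T.l - m - i0 := by
      rw [hS, Nat.card_Icc]
      omega
    omega
end

section
/- The number of templates of cogenus 1 is exactly 2: the template on two vertices {0,1} with a single edge 0→1 of weight 2, and the template on three vertices {0,1,2} with a single edge 0→2 of weight 1. -/
open scoped Classical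

/-- A directed multigraph on vertices `{0,…,l}` with positive integer edge weights,
given as the length `l` together with the multiset of edges `(i, j, w)`
(an edge from `i` to `j` of weight `w`). -/
structure PreTemplate where
  l : ℕ
  edges : Multiset (ℕ × ℕ × ℕ)

/-- `Γ` is a template: `l ≥ 1`; every edge `i → j` has `i < j ≤ l` and weight `≥ 1`;
every edge of length one (from `i` to `i+1`) has weight `≥ 2`; and every vertex `j` with
`1 ≤ j ≤ l − 1` is covered by some edge `i → k` with `i < j < k`. -/
def IsTemplate (Γ : PreTemplate) : Prop :=
  1 ≤ Γ.l ∧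
  (∀ e ∈ Γ.edges, e.1 < e.2.1 ∧ e.2.1 ≤ Γ.l ∧ 1 ≤ e.2.2) ∧
  (∀ e ∈ Γ.edges, e.2.1 = e.1 + 1 → 2 ≤ e.2.2) ∧
  (∀ j, 1 ≤ j → j < Γ.l → ∃ e ∈ Γ.edges, e.1 < j ∧ j < e.2.1)

/-- The cogenus `δ(Γ) = Σ_{e : i→j} ((j−i)·w(e) − 1)` of a template. -/
def tdelta (Γ : PreTemplate) : ℕ := edgesDelta Γ.edges

/-- `κ_j(Γ)`: the total weight of edges `i → k` of `Γ` with `i < j ≤ k`. -/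
def tkappa (Γ : PreTemplate) (j : ℕ) : ℕ := edgesKappa Γ.edges j

/-- `k_min(Γ) = max_{1 ≤ j ≤ l} (κ_j(Γ) − j + 1)`. -/
def kMin (Γ : PreTemplate) : ℕ := (Finset.Icc 1 Γ.l).sup fun j => tkappa Γ j + 1 - j

/-- The template on two vertices `{0,1}` with a single edge `0 → 1` of weight `2`. -/
def templateOne : PreTemplate := ⟨1, {(0, 1, 2)}⟩

/-- The template on three vertices `{0,1,2}` with a single edge `0 → 2` of weight `1`. -/
def templateTwo : PreTemplate := ⟨2, {(0, 2, 1)}⟩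

/-- There are exactly two templates of cogenus `1`: the template on `{0,1}` with one
edge `0 → 1` of weight `2`, and the template on `{0,1,2}` with one edge `0 → 2` of
weight `1`. -/
theorem templates_of_cogenus_one (Γ : PreTemplate) :
    (IsTemplate Γ ∧ tdelta Γ = 1) ↔ Γ = templateOne ∨ Γ = templateTwo := by
  constructor
  · rintro ⟨⟨hl, hE, hE1, hcov⟩, hδ⟩
    -- every edge contributes at least 1 to the cogenus
    have hterm : ∀ e ∈ Γ.edges, 1 ≤ (e.2.1 - e.1) * e.2.2 - 1 := by
      intro e he
      obtain ⟨h1, h2, h3⟩ := hE e he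
      rcases Nat.lt_or_ge e.1 (e.2.1 - 1) with h | h
      · have : 2 ≤ e.2.1 - e.1 := by omega
        have : 2 ≤ (e.2.1 - e.1) * e.2.2 :=
          le_trans this (Nat.le_mul_of_pos_right _ (by omega))
        omega
      · have hj : e.2.1 = e.1 + 1 := by omega
        have hw := hE1 e he hj
        have : e.2.1 - e.1 = 1 := by omega
        rw [this]; omega
    -- the multiset of edges has exactly one element
    have hcard : Multiset.card Γ.edges = 1 := by
      have h1 : Multiset.card Γ.edges * 1 ≤
          (Γ.edges.map fun e => (e.2.1 - e.1) * e.2.2 - 1).sum := by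
        have := Multiset.card_nsmul_le_sum (s := Γ.edges.map fun e => (e.2.1 - e.1) * e.2.2 - 1)
          (a := 1) (by
            intro x hx
            obtain ⟨e, he, rfl⟩ := Multiset.mem_map.mp hx
            exact hterm e he)
        simpa [smul_eq_mul] using this
      have hsum : (Γ.edges.map fun e => (e.2.1 - e.1) * e.2.2 - 1).sum = 1 := hδ
      rw [hsum] at h1
      have hne : Γ.edges ≠ 0 := by
        intro h
        rw [show tdelta Γ = (Γ.edges.map fun e => (e.2.1 - e.1) * e.2.2 - 1).sum from rfl, h] at hδ
        simp at hδ
      have := Multiset.card_pos.mpr hne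
      omega
    obtain ⟨e, hedges⟩ := Multiset.card_eq_one.mp hcard
    obtain ⟨i, j, w⟩ := e
    have hmem : (i, j, w) ∈ Γ.edges := by rw [hedges]; exact Multiset.mem_singleton_self _
    obtain ⟨hij, hjl, hw⟩ := hE _ hmem
    simp only at hij hjl hw
    have hδ' : (j - i) * w - 1 = 1 := by
      have : tdelta Γ = (j - i) * w - 1 := by
        rw [show tdelta Γ = (Γ.edges.map fun e => (e.2.1 - e.1) * e.2.2 - 1).sum from rfl, hedges]
        simp
      omega
    have hdw : (j - i) * w = 2 := by
      have h1 : 1 ≤ j - i := by omega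
      have : 1 ≤ (j - i) * w := Nat.one_le_iff_ne_zero.mpr (by positivity)
      omega
    set d := j - i with hd
    have hd1 : 1 ≤ d := by omega
    have hd2 : d ≤ 2 := by
      have : d ≤ d * w := Nat.le_mul_of_pos_right _ (by omega)
      omega
    interval_cases d
    · -- d = 1 : edge i → i+1 of weight 2, so l = 1, i = 0
      have hji : j = i + 1 := by omega
      have hw2 : w = 2 := by omega
      -- l = 1 : otherwise vertex 1 would need to be covered
      have hl1 : Γ.l = 1 := by
        by_contra h
        obtain ⟨e', he', h1, h2⟩ := hcov 1 le_rfl (by omega)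
        rw [hedges, Multiset.mem_singleton] at he'
        subst he'
        simp only at h1 h2
        omega
      have hi0 : i = 0 := by omega
      left
      cases Γ with
      | mk l E =>
        simp only at hedges hl1
        subst hl1 hi0 hji hw2
        simp [templateOne, hedges]
    · -- d = 2 : edge i → i+2 of weight 1, so l = 2, i = 0
      have hji : j = i + 2 := by omega
      have hw1 : w = 1 := by omega
      have hi0 : i = 0 := by
        by_contra h
        obtain ⟨e', he', h1, h2⟩ := hcov 1 le_rfl (by omega)
        rw [hedges, Multiset.mem_singleton] at he'
        subst he'
        simp only at h1 h2
        omega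
      have hl2' : Γ.l ≤ 2 := by
        by_contra h
        obtain ⟨e', he', h1, h2⟩ := hcov 2 (by omega) (by omega)
        rw [hedges, Multiset.mem_singleton] at he'
        subst he'
        simp only at h1 h2
        omega
      have hl2 : Γ.l = 2 := by omega
      right
      cases Γ with
      | mk l E =>
        simp only at hedges hl2
        subst hl2 hi0 hji hw1
        simp [templateTwo, hedges]
  · rintro (rfl | rfl)
    · refine ⟨⟨?_, ?_, ?_, ?_⟩, ?_⟩
      · decide
      · intro e he
        simp only [templateOne, Multiset.mem_singleton] at he
        subst he; exact ⟨by decide, by decide, by decide⟩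
      · intro e he
        simp only [templateOne, Multiset.mem_singleton] at he
        subst he; decide
      · intro j h1 h2
        have : templateOne.l = 1 := rfl
        omega
      · rfl
    · refine ⟨⟨?_, ?_, ?_, ?_⟩, ?_⟩
      · decide
      · intro e he
        simp only [templateTwo, Multiset.mem_singleton] at he
        subst he; exact ⟨by decide, by decide, by decide⟩
      · intro e he
        simp only [templateTwo, Multiset.mem_singleton] at he
        subst he; decide
      · intro j h1 h2
        have hx : templateTwo.l = 2 := rfl
        rw [hx] at h2
        refine ⟨(0,2,1), Multiset.mem_singleton_self _, ?_, ?_⟩ <;> simp <;> omega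
      · rfl
end
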